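/- If the symmetric block matrix [[A, Bᵀ], [B, C]] (with A of size n×n, C of size m×m, B of size m×n) is positive semidefinite, then ‖B‖ ≤ sqrt(‖A‖·‖C‖), where ‖·‖ is the operator norm. -/

import Mathlib

open Matrix

/-- Operator (spectral) norm of a real matrix. -/
noncomputable def opNorm {m n : Type*} [Fintype m] [Fintype n] [DecidableEq n]
    (A : Matrix m n ℝ) : ℝ :=
  ‖(Matrix.toEuclideanLin A).toContinuousLinearMap‖

lemma inner_eq_dot {k : ℕ} (u v : EuclideanSpace ℝ (Fin k)) :
    (inner ℝ u v : ℝ) = (WithLp.equiv 2 _ u) ⬝ᵥ (WithLp.equiv 2 _ v) := by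
  simp [PiLp.inner_apply, dotProduct, mul_comm]

lemma dot_mulVec_le {k : ℕ} (A : Matrix (Fin k) (Fin k) ℝ) (x : Fin k → ℝ) :
    x ⬝ᵥ A *ᵥ x ≤ opNorm A * (x ⬝ᵥ x) := by
  set x' : EuclideanSpace ℝ (Fin k) := (WithLp.equiv 2 _).symm x with hx'
  have h1 : x ⬝ᵥ A *ᵥ x = (inner ℝ x' (Matrix.toEuclideanLin A x') : ℝ) := by
    rw [inner_eq_dot, Matrix.toEuclideanLin_apply]
    simp [hx']
  have h2 : x ⬝ᵥ x = ‖x'‖ * ‖x'‖ := by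
    rw [← real_inner_self_eq_norm_mul_norm, inner_eq_dot]
    simp [hx']
  rw [h1, h2]
  calc (inner ℝ x' (Matrix.toEuclideanLin A x') : ℝ)
      ≤ ‖x'‖ * ‖Matrix.toEuclideanLin A x'‖ := real_inner_le_norm _ _
    _ ≤ ‖x'‖ * (opNorm A * ‖x'‖) := by
        have hle : ‖Matrix.toEuclideanLin A x'‖ ≤ opNorm A * ‖x'‖ :=
          (Matrix.toEuclideanLin A).toContinuousLinearMap.le_opNorm x'
        exact mul_le_mul_of_nonneg_left hle (norm_nonneg x')
    _ = opNorm A * (‖x'‖ * ‖x'‖) := by ring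

lemma key_ineq {n m : ℕ}
    (A : Matrix (Fin n) (Fin n) ℝ) (C : Matrix (Fin m) (Fin m) ℝ)
    (B : Matrix (Fin m) (Fin n) ℝ)
    (h : (Matrix.fromBlocks A Bᵀ B C).PosSemidef)
    (x : Fin n → ℝ) (y : Fin m → ℝ) :
    (y ⬝ᵥ B *ᵥ x) ^ 2 ≤ (x ⬝ᵥ A *ᵥ x) * (y ⬝ᵥ C *ᵥ y) := by
  have hswap : x ⬝ᵥ Bᵀ *ᵥ y = y ⬝ᵥ B *ᵥ x := by
    rw [Matrix.dotProduct_mulVec, Matrix.vecMul_transpose, dotProduct_comm]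
  have hq : ∀ t : ℝ, 0 ≤ (x ⬝ᵥ A *ᵥ x) * (t * t) + (2 * (y ⬝ᵥ B *ᵥ x)) * t
      + (y ⬝ᵥ C *ᵥ y) := by
    intro t
    have h0 := h.dotProduct_mulVec_nonneg (Sum.elim (t • x) y)
    rw [Matrix.fromBlocks_mulVec] at h0
    simp only [star_trivial, sumElim_dotProduct_sumElim, dotProduct_add,
      Sum.elim_comp_inl, Sum.elim_comp_inr, Matrix.mulVec_smul, smul_dotProduct,
      dotProduct_smul, smul_eq_mul] at h0
    rw [hswap] at h0
    nlinarith [h0]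
  have hd := discrim_le_zero hq
  rw [discrim] at hd
  nlinarith [hd]

theorem opNorm_offdiag_block_le {n m : ℕ}
    (A : Matrix (Fin n) (Fin n) ℝ) (C : Matrix (Fin m) (Fin m) ℝ)
    (B : Matrix (Fin m) (Fin n) ℝ)
    (h : (Matrix.fromBlocks A Bᵀ B C).PosSemidef) :
    opNorm B ≤ Real.sqrt (opNorm A * opNorm C) := by
  rw [opNorm]
  apply ContinuousLinearMap.opNorm_le_bound _ (Real.sqrt_nonneg _)
  intro x'
  simp only [LinearMap.coe_toContinuousLinearMap']
  set x : Fin n → ℝ := WithLp.equiv 2 _ x' with hx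
  set y : Fin m → ℝ := B *ᵥ x with hy
  have hBx : ‖Matrix.toEuclideanLin B x'‖ * ‖Matrix.toEuclideanLin B x'‖ = y ⬝ᵥ y := by
    rw [← real_inner_self_eq_norm_mul_norm, inner_eq_dot, Matrix.toEuclideanLin_apply]
    simp [hy, hx]
  have hxx : x ⬝ᵥ x = ‖x'‖ * ‖x'‖ := by
    rw [← real_inner_self_eq_norm_mul_norm, inner_eq_dot]
  have hyBx : y ⬝ᵥ B *ᵥ x = y ⬝ᵥ y := by rw [hy]
  have key := key_ineq A C B h x y
  have hA := dot_mulVec_le A x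
  have hC := dot_mulVec_le C y
  have hAnn : (0:ℝ) ≤ opNorm A := norm_nonneg _
  have hCnn : (0:ℝ) ≤ opNorm C := norm_nonneg _
  have hxAx : 0 ≤ x ⬝ᵥ A *ᵥ x := by
    have h0 := h.dotProduct_mulVec_nonneg (Sum.elim x 0)
    rw [Matrix.fromBlocks_mulVec] at h0
    simpa [sumElim_dotProduct_sumElim] using h0
  have hyCy : 0 ≤ y ⬝ᵥ C *ᵥ y := by
    have h0 := h.dotProduct_mulVec_nonneg (Sum.elim 0 y)
    rw [Matrix.fromBlocks_mulVec] at h0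
    simpa [sumElim_dotProduct_sumElim] using h0
  set r := ‖Matrix.toEuclideanLin B x'‖ with hr
  have hrnn : 0 ≤ r := norm_nonneg _
  have hnx : 0 ≤ ‖x'‖ := norm_nonneg _
  -- (r^2)^2 ≤ opA * ‖x'‖^2 * (opC * r^2)
  have h4 : (r * r) ^ 2 ≤ (opNorm A * opNorm C) * (‖x'‖ * ‖x'‖) * (r * r) := by
    rw [hyBx, ← hBx] at key
    have hmul : (x ⬝ᵥ A *ᵥ x) * (y ⬝ᵥ C *ᵥ y)
        ≤ (opNorm A * (x ⬝ᵥ x)) * (opNorm C * (y ⬝ᵥ y)) := by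
      refine mul_le_mul hA hC hyCy (mul_nonneg hAnn ?_)
      rw [hxx]; positivity
    calc (r * r) ^ 2 ≤ (x ⬝ᵥ A *ᵥ x) * (y ⬝ᵥ C *ᵥ y) := key
      _ ≤ (opNorm A * (x ⬝ᵥ x)) * (opNorm C * (y ⬝ᵥ y)) := hmul
      _ = (opNorm A * opNorm C) * (‖x'‖ * ‖x'‖) * (r * r) := by
          rw [hxx, ← hBx]; ring
  rcases eq_or_lt_of_le hrnn with hr0 | hr0
  · rw [← hr0]
    positivity
  · have h5 : r * r ≤ (opNorm A * opNorm C) * (‖x'‖ * ‖x'‖) := by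
      nlinarith [h4, mul_pos hr0 hr0]
    have h6 : r ≤ Real.sqrt ((opNorm A * opNorm C) * (‖x'‖ * ‖x'‖)) := by
      rw [show r = Real.sqrt (r * r) from (Real.sqrt_mul_self hrnn).symm]
      exact Real.sqrt_le_sqrt h5
    calc r ≤ Real.sqrt ((opNorm A * opNorm C) * (‖x'‖ * ‖x'‖)) := h6
      _ = Real.sqrt (opNorm A * opNorm C) * ‖x'‖ := by
          rw [Real.sqrt_mul (by positivity), Real.sqrt_mul_self hnx]
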